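/- Let f : ℝ → ℝ be C⁴ with f ≥ 0 and |f''''| ≤ 1 everywhere. Then for all real y: |f'(0)·y| ≤ (3/2) f(0) + f''(0) y² + (1/6) y⁴, and |f'''(0)·y³| ≤ 3 f(0) + 3 f''(0) y² + y⁴. -/

import Mathlib

open Set

private lemma idw_eq_aux {f : ℝ → ℝ} (hf : ContDiff ℝ 4 f) {s : Set ℝ}
    (hs : UniqueDiffOn ℝ s) (n : ℕ) (hn : n ≤ 4) :
    ∀ x ∈ s, iteratedDerivWithin n f s x = iteratedDeriv n f x := by
  induction n with
  | zero => simp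
  | succ n ih =>
    intro x hx
    rw [iteratedDerivWithin_succ, iteratedDeriv_succ,
      derivWithin_congr (fun y hy => ih (by omega) y hy) (ih (by omega) x hx)]
    exact ((hf.differentiable_iteratedDeriv n (by exact_mod_cast Nat.lt_of_succ_le hn)).differentiableAt).derivWithin (hs x hx)

private lemma taylor_nonneg_pos {f : ℝ → ℝ} (hf : ContDiff ℝ 4 f)
    (h0 : ∀ x, 0 ≤ f x) (h4 : ∀ x, |iteratedDeriv 4 f x| ≤ 1) {t : ℝ} (ht : 0 < t) :
    0 ≤ f 0 + deriv f 0 * t + iteratedDeriv 2 f 0 * t ^ 2 / 2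
      + iteratedDeriv 3 f 0 * t ^ 3 / 6 + t ^ 4 / 24 := by
  have hud : UniqueDiffOn ℝ (Icc (0:ℝ) t) := uniqueDiffOn_Icc ht
  have hcd : ContDiffOn ℝ 3 f (Icc 0 t) := (hf.of_le (by norm_num)).contDiffOn
  have hdiff : DifferentiableOn ℝ (iteratedDerivWithin 3 f (Icc 0 t)) (Ioo 0 t) := by
    intro y hy
    exact ((hf.differentiable_iteratedDeriv 3 (by norm_num)).differentiableAt.differentiableWithinAt).congr
      (fun z hz => idw_eq_aux hf hud 3 (by norm_num) z (Ioo_subset_Icc_self hz))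
      (idw_eq_aux hf hud 3 (by norm_num) y (Ioo_subset_Icc_self hy))
  obtain ⟨c, hc, hrem⟩ := taylor_mean_remainder_lagrange (n := 3) ht.ne
    (by rw [uIcc_of_le ht.le]; exact hcd) (by rw [uIcc_of_le ht.le, uIoo_of_le ht.le]; exact hdiff)
  rw [uIcc_of_le ht.le] at hrem
  rw [uIoo_of_le ht.le] at hc
  have h0mem : (0:ℝ) ∈ Icc (0:ℝ) t := ⟨le_refl _, ht.le⟩
  have hT : taylorWithinEval f 3 (Icc 0 t) 0 t
      = f 0 + deriv f 0 * t + iteratedDeriv 2 f 0 * t ^ 2 / 2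
        + iteratedDeriv 3 f 0 * t ^ 3 / 6 := by
    rw [taylor_within_apply]
    simp only [Finset.sum_range_succ, Finset.sum_range_zero,
      idw_eq_aux hf hud 0 (by norm_num) 0 h0mem,
      idw_eq_aux hf hud 1 (by norm_num) 0 h0mem,
      idw_eq_aux hf hud 2 (by norm_num) 0 h0mem,
      idw_eq_aux hf hud 3 (by norm_num) 0 h0mem]
    simp [iteratedDeriv_one, Nat.factorial]
    ring
  rw [hT] at hrem
  have hc4 : iteratedDerivWithin 4 f (Icc 0 t) c = iteratedDeriv 4 f c :=
    idw_eq_aux hf hud 4 (by norm_num) c (Ioo_subset_Icc_self hc)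
  rw [hc4] at hrem
  have hb := abs_le.mp (h4 c)
  have hft := h0 t
  have ht4 : 0 ≤ t ^ 4 := by positivity
  norm_num [Nat.factorial] at hrem
  nlinarith [hrem, hb.1, hb.2, hft, ht4]

private lemma taylor_nonneg {f : ℝ → ℝ} (hf : ContDiff ℝ 4 f)
    (h0 : ∀ x, 0 ≤ f x) (h4 : ∀ x, |iteratedDeriv 4 f x| ≤ 1) (t : ℝ) :
    0 ≤ f 0 + deriv f 0 * t + iteratedDeriv 2 f 0 * t ^ 2 / 2
      + iteratedDeriv 3 f 0 * t ^ 3 / 6 + t ^ 4 / 24 := by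
  rcases lt_trichotomy t 0 with htn | rfl | htp
  · set g : ℝ → ℝ := fun x => f (-x) with hg
    have hgc : ContDiff ℝ 4 g := hf.comp (contDiff_neg)
    have hgit : ∀ n : ℕ, ∀ x : ℝ, iteratedDeriv n g x = (-1:ℝ)^n * iteratedDeriv n f (-x) := by
      intro n x
      simpa [smul_eq_mul] using iteratedDeriv_comp_neg n f x
    have hg0 : ∀ x, 0 ≤ g x := fun x => h0 (-x)
    have hg4 : ∀ x, |iteratedDeriv 4 g x| ≤ 1 := by
      intro x
      rw [hgit 4 x]
      simpa [abs_mul] using h4 (-x)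
    have key := taylor_nonneg_pos hgc hg0 hg4 (t := -t) (by linarith)
    have hd1 : deriv g 0 = - deriv f 0 := by
      have h1 := hgit 1 0
      rw [iteratedDeriv_one, iteratedDeriv_one] at h1
      rw [h1]; norm_num
    have hd2 : iteratedDeriv 2 g 0 = iteratedDeriv 2 f 0 := by rw [hgit 2 0]; norm_num
    have hd3 : iteratedDeriv 3 g 0 = - iteratedDeriv 3 f 0 := by rw [hgit 3 0]; norm_num
    have hgz : g 0 = f 0 := by simp [hg]
    rw [hgz, hd1, hd2, hd3] at key
    nlinarith [key]
  · simpa using h0 0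
  · exact taylor_nonneg_pos hf h0 h4 htp

/-- Intermediate Taylor expansion inequalities in the Fefferman–Phong argument:
if `f ≥ 0` and `|f''''| ≤ 1` on `ℝ`, then for all real `y`,
`|f'(0)·y| ≤ (3/2) f(0) + f''(0) y² + (1/6) y⁴` and
`|f'''(0)·y³| ≤ 3 f(0) + 3 f''(0) y² + y⁴`. -/
theorem taylor_combination_bounds (f : ℝ → ℝ) (hf : ContDiff ℝ 4 f)
    (h0 : ∀ x, 0 ≤ f x) (h4 : ∀ x, |iteratedDeriv 4 f x| ≤ 1) :
    ∀ y : ℝ,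
      |deriv f 0 * y| ≤ (3 / 2) * f 0 + iteratedDeriv 2 f 0 * y ^ 2 + (1 / 6) * y ^ 4 ∧
      |iteratedDeriv 3 f 0 * y ^ 3| ≤ 3 * f 0 + 3 * iteratedDeriv 2 f 0 * y ^ 2 + y ^ 4 := by
  intro y
  have P := taylor_nonneg hf h0 h4
  have P1 := P y
  have P2 := P (-y)
  have P3 := P (2*y)
  have P4 := P (-(2*y))
  constructor
  · rw [abs_le]
    constructor
    · nlinarith [P1, P2, P3, P4]
    · nlinarith [P1, P2, P3, P4]
  · rw [abs_le]
    constructor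
    · nlinarith [P1, P2, P3, P4, sq_nonneg (y^2)]
    · nlinarith [P1, P2, P3, P4, sq_nonneg (y^2)]
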